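/- Let q ∈ {−1, 1}, 0 < ρ < 1 and ω ∈ ℝ. Then the series (1/(2π)) Σ_{k∈ℤ} e^{−iωk} (qρ²)^{|k|}/4 converges absolutely and its sum equals (1 − ρ²)(1 + ρ²) / (8π |1 − qρ² e^{iω}|²). That is, the spectral density of the MTD-AR(1) circular process with binding density of mean direction 0 and mean resultant length ρ is f_Θ(ω) = (1 − ρ²)(1 + ρ²) / (8π |1 − qρ² e^{iω}|²). -/

import Mathlib

open Real

theorem stmt14 (q ρ ω : ℝ) (hq : q = 1 ∨ q = -1) (hρ0 : 0 < ρ) (hρ1 : ρ < 1) :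
    Summable (fun k : ℤ =>
      ‖(1 / (2 * π) : ℂ) * Complex.exp (-Complex.I * (ω : ℂ) * (k : ℂ)) *
        ((((q * ρ ^ 2) ^ k.natAbs / 4 : ℝ)) : ℂ)‖) ∧
    HasSum (fun k : ℤ =>
      (1 / (2 * π) : ℂ) * Complex.exp (-Complex.I * (ω : ℂ) * (k : ℂ)) *
        ((((q * ρ ^ 2) ^ k.natAbs / 4 : ℝ)) : ℂ))
      ((((1 - ρ ^ 2) * (1 + ρ ^ 2) /
        (8 * π * ‖1 - (q : ℂ) * (ρ : ℂ) ^ 2 * Complex.exp (Complex.I * (ω : ℂ))‖ ^ 2) : ℝ)) : ℂ) := by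
  have hπ : (π : ℝ) ≠ 0 := Real.pi_ne_zero
  set r : ℝ := q * ρ ^ 2 with hr
  have hq2 : q ^ 2 = 1 := by rcases hq with h | h <;> simp [h]
  have habs : |r| = ρ ^ 2 := by
    rcases hq with h | h <;>
      simp [hr, h, abs_of_pos (pow_pos hρ0 2), abs_of_neg, neg_neg]
  have hrlt : |r| < 1 := by rw [habs]; nlinarith
  set u : ℂ := (r : ℂ) * Complex.exp (Complex.I * ω) with hu
  set v : ℂ := (r : ℂ) * Complex.exp (-(Complex.I * ω)) with hv
  have hexp1 : ∀ z : ℂ, z.re = 0 → ‖Complex.exp z‖ = 1 := by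
    intro z hz; rw [Complex.norm_exp, hz, Real.exp_zero]
  have hnu : ‖u‖ < 1 := by
    have : ‖u‖ = |r| * ‖Complex.exp (Complex.I * ω)‖ := by
      simp [hu, map_mul]
    rw [this, hexp1 _ (by simp), mul_one]; exact hrlt
  have hnv : ‖v‖ < 1 := by
    have : ‖v‖ = |r| * ‖Complex.exp (-(Complex.I * ω))‖ := by
      simp [hv, map_mul]
    rw [this, hexp1 _ (by simp), mul_one]; exact hrlt
  have huv : u * v = (r : ℂ) ^ 2 := by
    rw [hu, hv]
    rw [mul_mul_mul_comm, ← Complex.exp_add, add_neg_cancel, Complex.exp_zero]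
    ring
  have hune : (1 : ℂ) - u ≠ 0 := by
    intro h
    rw [sub_eq_zero] at h
    rw [← h] at hnu; simp at hnu
  have hvne : (1 : ℂ) - v ≠ 0 := by
    intro h
    rw [sub_eq_zero] at h
    rw [← h] at hnv; simp at hnv
  set c : ℂ := 1 / (8 * (π : ℂ)) with hc
  set f : ℤ → ℂ := fun k =>
    (1 / (2 * π) : ℂ) * Complex.exp (-Complex.I * (ω : ℂ) * (k : ℂ)) *
      (((r ^ k.natAbs / 4 : ℝ)) : ℂ) with hf
  have hpos : HasSum (fun n : ℕ => f n) (c * (1 - v)⁻¹) := by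
    have := (hasSum_geometric_of_norm_lt_one hnv).mul_left c
    refine this.congr_fun fun n => ?_
    simp only [hf, hv, hc, Int.natAbs_natCast]
    push_cast
    rw [mul_pow, show (-Complex.I * ω * n : ℂ) = n * (-(Complex.I * ω)) by ring,
      Complex.exp_nat_mul]
    field_simp
    ring
  have hneg : HasSum (fun n : ℕ => f (-(n + 1))) (c * u * (1 - u)⁻¹) := by
    have := ((hasSum_geometric_of_norm_lt_one hnu).mul_left (c * u))
    refine this.congr_fun fun n => ?_
    have hna : (-(n + 1 : ℤ)).natAbs = n + 1 := by
      rw [Int.natAbs_neg]; exact_mod_cast Int.natAbs_natCast (n + 1)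
    simp only [hf, hu, hc, hna]
    push_cast
    rw [mul_pow, show (-Complex.I * ω * (-((n : ℂ) + 1)) : ℂ) = ((n + 1 : ℕ) : ℂ) * (Complex.I * ω) by push_cast; ring,
      Complex.exp_nat_mul, pow_succ]
    field_simp
    ring
  have hsum : HasSum f (c * (1 - v)⁻¹ + c * u * (1 - u)⁻¹) :=
    hpos.of_nat_of_neg_add_one hneg
  have habs2 : (((‖1 - (q : ℂ) * (ρ : ℂ) ^ 2 * Complex.exp (Complex.I * ω)‖ : ℝ)) : ℂ) ^ 2
      = (1 - u) * (1 - v) := by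
    have h1 : (1 : ℂ) - (q : ℂ) * (ρ : ℂ) ^ 2 * Complex.exp (Complex.I * ω) = 1 - u := by
      rw [hu]; push_cast [hr]; ring
    rw [h1, ← Complex.ofReal_pow, Complex.sq_norm, ← Complex.mul_conj]
    congr 1
    rw [map_sub, map_one, hu, hv, map_mul, Complex.conj_ofReal, ← Complex.exp_conj]
    congr 2
    simp [map_mul, Complex.conj_I, Complex.conj_ofReal]
  have htarget : (((1 - ρ ^ 2) * (1 + ρ ^ 2) /
      (8 * π * ‖1 - (q : ℂ) * (ρ : ℂ) ^ 2 * Complex.exp (Complex.I * (ω : ℂ))‖ ^ 2) : ℝ) : ℂ)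
      = c * (1 - v)⁻¹ + c * u * (1 - u)⁻¹ := by
    push_cast
    rw [habs2, hc]
    have hr2 : (r : ℂ) ^ 2 = (ρ : ℂ) ^ 4 := by
      push_cast [hr]
      rw [mul_pow]
      have : ((q : ℂ)) ^ 2 = 1 := by exact_mod_cast congrArg (fun x : ℝ => (x : ℂ)) hq2
      rw [this]; ring
    have hπc : ((π : ℝ) : ℂ) ≠ 0 := Complex.ofReal_ne_zero.mpr hπ
    field_simp
    linear_combination huv + hr2
  constructor
  · exact summable_norm_iff.mpr hsum.summable
  · rw [htarget]; exact hsum
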